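/- Midpoint-rule error bound for the Gaussian density: let φ(x) = (2π)^{−1/2} e^{−x²/2}. For any h > 0, b ≥ 0, and positive integer j₀, | h·Σ_{i=0}^{j₀} φ(b+ih) − ∫_{b−h/2}^{b+(j₀+1/2)h} φ(x) dx | ≤ (h²/12)·[ ∫_{b−h/2}^{b+j₀h+h/2} |φ''(x)| dx + (4+h)·max{|φ''(x)| : b−h/2 < x < b+j₀h+h/2} ]. -/

import Mathlib

open Real
open MeasureTheory intervalIntegral

/-- The standard normal density. -/
noncomputable def stdGauss (x : ℝ) : ℝ := (Real.sqrt (2 * π))⁻¹ * Real.exp (-x ^ 2 / 2)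

/-- Its second derivative `φ''(x) = (x² − 1)φ(x)`. -/
noncomputable def stdGauss'' (x : ℝ) : ℝ := (x ^ 2 - 1) * stdGauss x

lemma sg_pos (x : ℝ) : 0 < stdGauss x := by
  unfold stdGauss
  positivity

lemma sg_cont : Continuous stdGauss := by
  unfold stdGauss
  fun_prop

lemma sg''_cont : Continuous stdGauss'' := by
  unfold stdGauss''
  exact (by fun_prop : Continuous fun x : ℝ => x ^ 2 - 1).mul sg_cont

lemma sg_deriv (x : ℝ) : HasDerivAt stdGauss (-x * stdGauss x) x := by
  have h1 : HasDerivAt (fun y : ℝ => -y ^ 2 / 2) (-x) x := by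
    have := ((hasDerivAt_pow 2 x).neg.div_const 2)
    refine this.congr_deriv ?_
    simp
    ring
  have h2 := h1.exp
  have h3 := h2.const_mul ((Real.sqrt (2 * π))⁻¹)
  unfold stdGauss
  refine h3.congr_deriv ?_
  ring

lemma sg'_deriv (x : ℝ) : HasDerivAt (fun y => -y * stdGauss y) (stdGauss'' x) x := by
  have := ((hasDerivAt_id x).neg.mul (sg_deriv x))
  simp only [Pi.neg_apply, id_eq] at this
  refine this.congr_deriv ?_
  unfold stdGauss''
  ring

lemma xg_deriv (x : ℝ) : HasDerivAt (fun y => y * stdGauss y) ((1 - x ^ 2) * stdGauss x) x := by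
  have := ((hasDerivAt_id x).mul (sg_deriv x))
  simp only [id_eq] at this
  refine this.congr_deriv ?_
  ring


lemma int_deriv (a t : ℝ) : HasDerivAt (fun u => ∫ x in a..u, stdGauss x) (stdGauss t) t :=
  integral_hasDerivAt_right (sg_cont.intervalIntegrable _ _)
    (sg_cont.stronglyMeasurableAtFilter _ _) sg_cont.continuousAt

lemma half_left (a c : ℝ) :
    ∫ t in a..c, stdGauss'' t * ((t - a) ^ 2 / 2)
      = (-c * stdGauss c) * ((c - a) ^ 2 / 2) - stdGauss c * (c - a)
        + ∫ x in a..c, stdGauss x := by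
  have key : ∀ t ∈ Set.uIcc a c, HasDerivAt
      (fun u => (-u * stdGauss u) * ((u - a) ^ 2 / 2) - stdGauss u * (u - a)
        + ∫ x in a..u, stdGauss x)
      (stdGauss'' t * ((t - a) ^ 2 / 2)) t := by
    intro t _
    have hK : HasDerivAt (fun y : ℝ => (y - a) ^ 2 / 2) (t - a) t := by
      have := (((hasDerivAt_id t).sub_const a).pow 2).div_const 2
      simpa using this
    have hK' : HasDerivAt (fun y : ℝ => y - a) 1 t := (hasDerivAt_id t).sub_const a
    have h1 := (sg'_deriv t).mul hK
    have h2 := (sg_deriv t).mul hK'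
    have h3 := (h1.sub h2).add (int_deriv a t)
    refine h3.congr_deriv ?_
    unfold stdGauss''
    ring
  have := integral_eq_sub_of_hasDerivAt key
    ((sg''_cont.mul (by fun_prop)).intervalIntegrable _ _)
  simpa using this

lemma half_right (c r : ℝ) :
    ∫ t in c..r, stdGauss'' t * ((r - t) ^ 2 / 2)
      = (∫ x in c..r, stdGauss x)
        - (-c * stdGauss c) * ((r - c) ^ 2 / 2) - stdGauss c * (r - c) := by
  have key : ∀ t ∈ Set.uIcc c r, HasDerivAt
      (fun u => (-u * stdGauss u) * ((r - u) ^ 2 / 2) + stdGauss u * (r - u)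
        + ∫ x in c..u, stdGauss x)
      (stdGauss'' t * ((r - t) ^ 2 / 2)) t := by
    intro t _
    have hK : HasDerivAt (fun y : ℝ => (r - y) ^ 2 / 2) (-(r - t)) t := by
      have := (((hasDerivAt_id t).const_sub r).pow 2).div_const 2
      refine this.congr_deriv ?_
      simp
      ring
    have hK' : HasDerivAt (fun y : ℝ => r - y) (-1) t := (hasDerivAt_id t).const_sub r
    have h1 := (sg'_deriv t).mul hK
    have h2 := (sg_deriv t).mul hK'
    have h3 := (h1.add h2).add (int_deriv c t)
    refine h3.congr_deriv ?_
    unfold stdGauss''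
    ring
  have := integral_eq_sub_of_hasDerivAt key
    ((sg''_cont.mul (by fun_prop)).intervalIntegrable _ _)
  rw [this]
  simp
  ring

lemma midpoint_interval (c δ : ℝ) (hδ : 0 < δ) :
    |2 * δ * stdGauss c - ∫ x in (c - δ)..(c + δ), stdGauss x|
      ≤ δ ^ 2 / 2 * ∫ x in (c - δ)..(c + δ), |stdGauss'' x| := by
  set a := c - δ with ha
  set r := c + δ with hr
  have hac : a ≤ c := by rw [ha]; linarith
  have hcr : c ≤ r := by rw [hr]; linarith
  have hL := half_left a c
  have hR := half_right c r
  have hca : c - a = δ := by rw [ha]; ring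
  have hrc : r - c = δ := by rw [hr]; ring
  rw [hca] at hL
  rw [hrc] at hR
  have hadd : (∫ x in a..c, stdGauss x) + ∫ x in c..r, stdGauss x
      = ∫ x in a..r, stdGauss x :=
    integral_add_adjacent_intervals (sg_cont.intervalIntegrable _ _)
      (sg_cont.intervalIntegrable _ _)
  have haddabs : (∫ x in a..c, |stdGauss'' x|) + ∫ x in c..r, |stdGauss'' x|
      = ∫ x in a..r, |stdGauss'' x| :=
    integral_add_adjacent_intervals ((sg''_cont.abs).intervalIntegrable _ _)
      ((sg''_cont.abs).intervalIntegrable _ _)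
  -- bound the left piece
  have bL : |∫ t in a..c, stdGauss'' t * ((t - a) ^ 2 / 2)|
      ≤ δ ^ 2 / 2 * ∫ t in a..c, |stdGauss'' t| := by
    calc |∫ t in a..c, stdGauss'' t * ((t - a) ^ 2 / 2)|
        ≤ ∫ t in a..c, |stdGauss'' t * ((t - a) ^ 2 / 2)| :=
          abs_integral_le_integral_abs hac
      _ ≤ ∫ t in a..c, |stdGauss'' t| * (δ ^ 2 / 2) := by
          apply integral_mono_on hac
          · exact ((sg''_cont.mul (by fun_prop)).abs).intervalIntegrable _ _
          · exact ((sg''_cont.abs).mul continuous_const).intervalIntegrable _ _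
          · intro t ht
            rw [abs_mul]
            apply mul_le_mul_of_nonneg_left _ (abs_nonneg _)
            rw [abs_of_nonneg (by positivity)]
            have h1 : t - a ≤ δ := by
              rw [ha]; linarith [ht.2]
            have h0 : 0 ≤ t - a := by linarith [ht.1]
            nlinarith
      _ = δ ^ 2 / 2 * ∫ t in a..c, |stdGauss'' t| := by
          rw [intervalIntegral.integral_mul_const]; ring
  have bR : |∫ t in c..r, stdGauss'' t * ((r - t) ^ 2 / 2)|
      ≤ δ ^ 2 / 2 * ∫ t in c..r, |stdGauss'' t| := by
    calc |∫ t in c..r, stdGauss'' t * ((r - t) ^ 2 / 2)|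
        ≤ ∫ t in c..r, |stdGauss'' t * ((r - t) ^ 2 / 2)| :=
          abs_integral_le_integral_abs hcr
      _ ≤ ∫ t in c..r, |stdGauss'' t| * (δ ^ 2 / 2) := by
          apply integral_mono_on hcr
          · exact ((sg''_cont.mul (by fun_prop)).abs).intervalIntegrable _ _
          · exact ((sg''_cont.abs).mul continuous_const).intervalIntegrable _ _
          · intro t ht
            rw [abs_mul]
            apply mul_le_mul_of_nonneg_left _ (abs_nonneg _)
            rw [abs_of_nonneg (by positivity)]
            have h1 : r - t ≤ δ := by
              rw [hr]; linarith [ht.1]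
            have h0 : 0 ≤ r - t := by linarith [ht.2]
            nlinarith
      _ = δ ^ 2 / 2 * ∫ t in c..r, |stdGauss'' t| := by
          rw [intervalIntegral.integral_mul_const]; ring
  have key : 2 * δ * stdGauss c - (∫ x in a..r, stdGauss x)
      = -((∫ t in a..c, stdGauss'' t * ((t - a) ^ 2 / 2))
          + ∫ t in c..r, stdGauss'' t * ((r - t) ^ 2 / 2)) := by
    rw [hL, hR, ← hadd]
    ring
  rw [key, abs_neg]
  calc |(∫ t in a..c, stdGauss'' t * ((t - a) ^ 2 / 2))
          + ∫ t in c..r, stdGauss'' t * ((r - t) ^ 2 / 2)|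
      ≤ _ + _ := abs_add_le _ _
    _ ≤ δ ^ 2 / 2 * (∫ t in a..c, |stdGauss'' t|)
        + δ ^ 2 / 2 * ∫ t in c..r, |stdGauss'' t| := add_le_add bL bR
    _ = δ ^ 2 / 2 * ∫ x in a..r, |stdGauss'' x| := by rw [← haddabs]; ring


lemma xg_le (x : ℝ) : x * stdGauss x ≤ stdGauss 1 := by
  have hC : (0:ℝ) < (Real.sqrt (2 * π))⁻¹ := by positivity
  have core : x * Real.exp (-x ^ 2 / 2) ≤ Real.exp (-(1:ℝ) ^ 2 / 2) := by
    rcases le_or_gt x 0 with hx | hx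
    · nlinarith [Real.exp_pos (-x ^ 2 / 2), Real.exp_pos (-(1:ℝ) ^ 2 / 2),
        mul_nonneg (neg_nonneg.mpr hx) (Real.exp_pos (-x ^ 2 / 2)).le]
    · have key : x ≤ Real.exp ((x ^ 2 - 1) / 2) := by
        nlinarith [Real.add_one_le_exp ((x ^ 2 - 1) / 2), sq_nonneg (x - 1)]
      have h2 := mul_le_mul_of_nonneg_right key (Real.exp_pos (-x ^ 2 / 2)).le
      rwa [← Real.exp_add, show (x ^ 2 - 1) / 2 + -x ^ 2 / 2 = -(1:ℝ) ^ 2 / 2 by ring] at h2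
  unfold stdGauss
  calc x * ((Real.sqrt (2 * π))⁻¹ * Real.exp (-x ^ 2 / 2))
      = (Real.sqrt (2 * π))⁻¹ * (x * Real.exp (-x ^ 2 / 2)) := by ring
    _ ≤ _ := mul_le_mul_of_nonneg_left core hC.le

lemma le_csSup_closure {t : Set ℝ} (hb : BddAbove t) {y : ℝ} (hy : y ∈ closure t) :
    y ≤ sSup t :=
  (closure_minimal (fun _ hz => le_csSup hb hz) isClosed_Iic) hy

lemma sqrt3_sq : Real.sqrt 3 ^ 2 = 3 := Real.sq_sqrt (by norm_num)
lemma sqrt3_ge1 : (1:ℝ) ≤ Real.sqrt 3 := by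
  nlinarith [sqrt3_sq, Real.sqrt_nonneg 3]
lemma sqrt3_lt2 : Real.sqrt 3 < 2 := by
  nlinarith [sqrt3_sq, Real.sqrt_nonneg 3, sq_nonneg (Real.sqrt 3 - 2)]

lemma five_le : 5 * stdGauss 1 ≤ 16 * stdGauss (Real.sqrt 3) := by
  unfold stdGauss
  rw [sqrt3_sq]
  have hE : Real.exp (-(1:ℝ) ^ 2 / 2) = Real.exp 1 * Real.exp (-3 / 2) := by
    rw [← Real.exp_add]; norm_num
  rw [hE]
  have h2 : (0:ℝ) < Real.exp (-3 / 2) := Real.exp_pos _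
  have hC : (0:ℝ) ≤ (Real.sqrt (2 * π))⁻¹ := by positivity
  have h16 : (0:ℝ) ≤ 16 - 5 * Real.exp 1 := by
    nlinarith [Real.exp_one_lt_d9]
  nlinarith [mul_nonneg (mul_nonneg hC h2.le) h16]


lemma T8_long (ℓ r S : ℝ) (hlr : ℓ < r) (h6 : 6 < r)
    (hub : ∀ x ∈ Set.Icc ℓ r, |stdGauss'' x| ≤ S) :
    (∫ x in ℓ..r, |stdGauss'' x|) ≤ 8 * S := by
  have hftc : ∫ x in ℓ..r, stdGauss'' x = -r * stdGauss r - -ℓ * stdGauss ℓ :=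
    integral_eq_sub_of_hasDerivAt (fun t _ => sg'_deriv t)
      (sg''_cont.intervalIntegrable _ _)
  have hs3 : Real.sqrt 3 < r := by linarith [sqrt3_lt2]
  have hr0 : (0:ℝ) < r := by linarith
  rcases le_or_gt (Real.sqrt 3) ℓ with hcase | hcase
  · have hs1 : (1:ℝ) ≤ ℓ := le_trans sqrt3_ge1 hcase
    have hsq : (3:ℝ) ≤ ℓ ^ 2 := by
      have := pow_le_pow_left₀ (Real.sqrt_nonneg 3) hcase 2
      rwa [sqrt3_sq] at this
    have hpos : ∀ x ∈ Set.uIcc ℓ r, 0 ≤ stdGauss'' x := by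
      intro x hx
      rw [Set.uIcc_of_le hlr.le] at hx
      have hx1 : (1:ℝ) ≤ x := le_trans hs1 hx.1
      unfold stdGauss''
      exact mul_nonneg (by nlinarith) (sg_pos x).le
    have hcongr : (∫ x in ℓ..r, |stdGauss'' x|) = ∫ x in ℓ..r, stdGauss'' x :=
      integral_congr (fun x hx => abs_of_nonneg (hpos x hx))
    have h1 : (∫ x in ℓ..r, |stdGauss'' x|) ≤ ℓ * stdGauss ℓ := by
      rw [hcongr, hftc]
      nlinarith [sg_pos r]
    have hscal : ℓ ≤ 8 * (ℓ ^ 2 - 1) := by nlinarith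
    have h2 : ℓ * stdGauss ℓ ≤ 8 * ((ℓ ^ 2 - 1) * stdGauss ℓ) := by
      nlinarith [mul_le_mul_of_nonneg_right hscal (sg_pos ℓ).le]
    have h3 : |stdGauss'' ℓ| ≤ S := hub ℓ ⟨le_refl _, hlr.le⟩
    have h4 : stdGauss'' ℓ = (ℓ ^ 2 - 1) * stdGauss ℓ := rfl
    rw [abs_of_nonneg (by nlinarith [sg_pos ℓ] : (0:ℝ) ≤ stdGauss'' ℓ), h4] at h3
    linarith
  · have hSlb : 2 * stdGauss (Real.sqrt 3) ≤ S := by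
      have h1 := hub _ ⟨hcase.le, hs3.le⟩
      have h2 : |stdGauss'' (Real.sqrt 3)| = 2 * stdGauss (Real.sqrt 3) := by
        unfold stdGauss''
        rw [sqrt3_sq, abs_of_nonneg (by nlinarith [sg_pos (Real.sqrt 3)])]
        ring
      rwa [h2] at h1
    set m : ℝ → ℝ := fun x => max (1 - x ^ 2) 0 * stdGauss x with hm
    have hmcont : Continuous m :=
      ((continuous_const.sub (continuous_pow 2)).max continuous_const).mul sg_cont
    have hmnn : ∀ x, 0 ≤ m x := fun x =>
      mul_nonneg (le_max_right _ _) (sg_pos x).le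
    have hptwise : ∀ x, |stdGauss'' x| = stdGauss'' x + 2 * m x := by
      intro x
      rcases le_or_gt (x ^ 2) 1 with hx | hx
      · rw [hm]
        unfold stdGauss''
        rw [abs_of_nonpos (by nlinarith [sg_pos x])]
        dsimp only
        rw [max_eq_left (by linarith)]
        ring
      · rw [hm]
        unfold stdGauss''
        rw [abs_of_nonneg (by nlinarith [sg_pos x])]
        dsimp only
        rw [max_eq_right (by linarith : 1 - x ^ 2 ≤ 0)]
        ring
    have hsplit : (∫ x in ℓ..r, |stdGauss'' x|)
        = (∫ x in ℓ..r, stdGauss'' x) + 2 * ∫ x in ℓ..r, m x := by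
      rw [integral_congr (fun x _ => hptwise x),
        intervalIntegral.integral_add (sg''_cont.intervalIntegrable _ _)
          ((hmcont.intervalIntegrable _ _).const_mul 2),
        intervalIntegral.integral_const_mul]
    have hI1 : (∫ x in ℓ..r, stdGauss'' x) ≤ stdGauss 1 := by
      rw [hftc]
      nlinarith [xg_le ℓ, sg_pos r, hr0]
    have hI2 : (∫ x in ℓ..r, m x) ≤ 2 * stdGauss 1 := by
      set ℓ' := min ℓ (-1 : ℝ) with hℓ'
      set r' := max r (1 : ℝ) with hr'
      have hl'1 : ℓ' ≤ -1 := min_le_right _ _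
      have hr'1 : (1:ℝ) ≤ r' := le_max_right _ _
      have hmono : (∫ x in ℓ..r, m x) ≤ ∫ x in ℓ'..r', m x :=
        integral_mono_interval (min_le_left _ _) hlr.le (le_max_left _ _)
          (Filter.Eventually.of_forall hmnn) (hmcont.intervalIntegrable _ _)
      have hadd1 : (∫ x in ℓ'..(-1:ℝ), m x) + ∫ x in (-1:ℝ)..r', m x
          = ∫ x in ℓ'..r', m x :=
        integral_add_adjacent_intervals (hmcont.intervalIntegrable _ _)
          (hmcont.intervalIntegrable _ _)
      have hadd2 : (∫ x in (-1:ℝ)..(1:ℝ), m x) + ∫ x in (1:ℝ)..r', m x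
          = ∫ x in (-1:ℝ)..r', m x :=
        integral_add_adjacent_intervals (hmcont.intervalIntegrable _ _)
          (hmcont.intervalIntegrable _ _)
      have hz1 : (∫ x in ℓ'..(-1:ℝ), m x) = 0 := by
        have hzz : ∀ x ∈ Set.uIcc ℓ' (-1:ℝ), m x = (fun _ => (0:ℝ)) x := by
          intro x hx
          rw [Set.uIcc_of_le hl'1] at hx
          have hx1 : x ≤ -1 := hx.2
          rw [hm]
          dsimp only
          rw [max_eq_right (by nlinarith : 1 - x ^ 2 ≤ 0)]
          ring
        rw [integral_congr hzz]
        simp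
      have hz2 : (∫ x in (1:ℝ)..r', m x) = 0 := by
        have hzz : ∀ x ∈ Set.uIcc (1:ℝ) r', m x = (fun _ => (0:ℝ)) x := by
          intro x hx
          rw [Set.uIcc_of_le hr'1] at hx
          have hx1 : (1:ℝ) ≤ x := hx.1
          rw [hm]
          dsimp only
          rw [max_eq_right (by nlinarith : 1 - x ^ 2 ≤ 0)]
          ring
        rw [integral_congr hzz]
        simp
      have hmid : (∫ x in (-1:ℝ)..(1:ℝ), m x) = 2 * stdGauss 1 := by
        have hcongr : ∀ x ∈ Set.uIcc (-1:ℝ) (1:ℝ),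
            m x = (fun y => (1 - y ^ 2) * stdGauss y) x := by
          intro x hx
          rw [Set.uIcc_of_le (by norm_num : (-1:ℝ) ≤ 1)] at hx
          rw [hm]
          dsimp only
          rw [max_eq_left (by nlinarith [hx.1, hx.2] : (0:ℝ) ≤ 1 - x ^ 2)]
        rw [integral_congr hcongr,
          integral_eq_sub_of_hasDerivAt (fun t _ => xg_deriv t)
            (((continuous_const.sub (continuous_pow 2)).mul
              sg_cont).intervalIntegrable _ _)]
        have hev : stdGauss (-1) = stdGauss 1 := by unfold stdGauss; norm_num
        rw [hev]
        ring
      linarith [hmono, hadd1, hadd2, hz1, hz2, hmid]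
    nlinarith [five_le, hSlb, hsplit, hI1, hI2]

/-- Midpoint-rule error bound for the Gaussian density: for `h > 0`, `b ≥ 0` and a
positive integer `j₀`,
`|h·Σ_{i=0}^{j₀} φ(b+ih) − ∫_{b−h/2}^{b+(j₀+1/2)h} φ| ≤
 (h²/12)·[∫_{b−h/2}^{b+j₀h+h/2} |φ''| + (4+h)·sup{|φ''(x)| : b−h/2 < x < b+j₀h+h/2}]`. -/
theorem gaussian_midpoint_rule (h b : ℝ) (hh : 0 < h) (hb : 0 ≤ b)
    (j₀ : ℕ) (hj₀ : 0 < j₀) :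
    |h * ∑ i ∈ Finset.range (j₀ + 1), stdGauss (b + i * h)
        - ∫ x in (b - h / 2)..(b + ((j₀ : ℝ) + 1 / 2) * h), stdGauss x|
      ≤ h ^ 2 / 12 * ((∫ x in (b - h / 2)..(b + (j₀ : ℝ) * h + h / 2), |stdGauss'' x|)
          + (4 + h) * sSup ((fun x => |stdGauss'' x|) ''
              Set.Ioo (b - h / 2) (b + (j₀ : ℝ) * h + h / 2))) := by
  set ℓ := b - h / 2 with hℓdef
  set r := b + (j₀ : ℝ) * h + h / 2 with hrdef
  have hbr : b + ((j₀ : ℝ) + 1 / 2) * h = r := by rw [hrdef]; ring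
  rw [hbr]
  have hj1 : (1:ℝ) ≤ (j₀ : ℝ) := by exact_mod_cast hj₀
  have hlr : ℓ < r := by rw [hℓdef, hrdef]; nlinarith
  set S := sSup ((fun x => |stdGauss'' x|) '' Set.Ioo ℓ r) with hSdef
  have hbdd : BddAbove ((fun x => |stdGauss'' x|) '' Set.Ioo ℓ r) :=
    ((isCompact_Icc.image (sg''_cont.abs)).bddAbove).mono
      (Set.image_mono Set.Ioo_subset_Icc_self)
  have hub : ∀ x ∈ Set.Icc ℓ r, |stdGauss'' x| ≤ S := by
    intro x hx
    have hcl : x ∈ closure (Set.Ioo ℓ r) := by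
      rw [closure_Ioo (ne_of_lt hlr)]; exact hx
    exact le_csSup_closure hbdd
      ((Continuous.continuousWithinAt (sg''_cont.abs)).mem_closure_image hcl)
  have hS0 : 0 ≤ S := le_trans (abs_nonneg _) (hub ℓ ⟨le_refl _, hlr.le⟩)
  set n := j₀ + 1 with hn
  set a : ℕ → ℝ := fun i => b + i * h - h / 2 with hadef
  have ha0 : a 0 = ℓ := by simp [hadef, hℓdef]
  have han : a n = r := by rw [hadef, hrdef, hn]; push_cast; ring
  have hsum1 : ∑ i ∈ Finset.range n, ∫ x in a i..a (i+1), stdGauss x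
      = ∫ x in (a 0)..(a n), stdGauss x :=
    sum_integral_adjacent_intervals (fun i _ => sg_cont.intervalIntegrable _ _)
  have hsum2 : ∑ i ∈ Finset.range n, ∫ x in a i..a (i+1), |stdGauss'' x|
      = ∫ x in (a 0)..(a n), |stdGauss'' x| :=
    sum_integral_adjacent_intervals (fun i _ => (sg''_cont.abs).intervalIntegrable _ _)
  rw [ha0, han] at hsum1 hsum2
  have key1 : |h * ∑ i ∈ Finset.range n, stdGauss (b + i * h)
      - ∫ x in ℓ..r, stdGauss x| ≤ h ^ 2 / 8 * ∫ x in ℓ..r, |stdGauss'' x| := by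
    rw [← hsum1, Finset.mul_sum, ← Finset.sum_sub_distrib]
    refine le_trans (Finset.abs_sum_le_sum_abs _ _) ?_
    rw [← hsum2, Finset.mul_sum]
    apply Finset.sum_le_sum
    intro i _
    have hmi := midpoint_interval (b + i * h) (h / 2) (by linarith)
    have e1 : b + (i:ℝ) * h - h / 2 = a i := by rw [hadef]
    have e2 : b + (i:ℝ) * h + h / 2 = a (i + 1) := by rw [hadef]; push_cast; ring
    rw [e1, e2] at hmi
    calc |h * stdGauss (b + ↑i * h) - ∫ x in a i..a (i + 1), stdGauss x|
        = |2 * (h / 2) * stdGauss (b + ↑i * h) - ∫ x in a i..a (i + 1), stdGauss x| := by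
          rw [show 2 * (h / 2) = h from by ring]
      _ ≤ (h / 2) ^ 2 / 2 * ∫ x in a i..a (i + 1), |stdGauss'' x| := hmi
      _ = h ^ 2 / 8 * ∫ x in a i..a (i + 1), |stdGauss'' x| := by ring
  set T := ∫ x in ℓ..r, |stdGauss'' x| with hTdef
  have hT0 : 0 ≤ T :=
    intervalIntegral.integral_nonneg hlr.le (fun x _ => abs_nonneg _)
  have hftc : ∫ x in ℓ..r, stdGauss'' x = -r * stdGauss r - -ℓ * stdGauss ℓ :=
    integral_eq_sub_of_hasDerivAt (fun t _ => sg'_deriv t)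
      (sg''_cont.intervalIntegrable _ _)
  have hrl : r - ℓ = ((j₀:ℝ) + 1) * h := by rw [hrdef, hℓdef]; ring
  have hT8 : T ≤ 8 * S := by
    rcases le_or_gt (r - ℓ) 8 with hL | hL
    · have h1 : T ≤ (r - ℓ) * S := by
        have h2 := intervalIntegral.integral_mono_on hlr.le
          ((sg''_cont.abs).intervalIntegrable _ _)
          (intervalIntegrable_const : IntervalIntegrable (fun _ => S) volume ℓ r) hub
        rw [intervalIntegral.integral_const, smul_eq_mul] at h2
        exact h2
      nlinarith
    · have hjh : h ≤ (j₀:ℝ) * h := by nlinarith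
      have h6 : 6 < r := by
        rw [hrdef]
        rw [hrdef, hℓdef] at hL
        nlinarith
      exact T8_long ℓ r S hlr h6 hub
  refine le_trans key1 ?_
  nlinarith [mul_nonneg (sq_nonneg h) (by linarith : (0:ℝ) ≤ 8 * S - T),
    mul_nonneg (mul_nonneg hh.le (sq_nonneg h)) hS0, hT0]
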